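/- arXiv:1003.4856 — 3 statements merged into one kernel-verified Lean document; each statement's English description precedes it below -/
import Mathlib

section
/- Let (Σ, T, μ) be an α-mixing shift system. For any sequence of sets A_n ∈ ℱ_0^{n-1} with μ(A_n) > 0 such that μ(τ_{A_n} ≤ n) → 0 as n → ∞, there exist constants λ(A_n) ∈ (0, 2] such that the hitting time to A_n, rescaled by λ(A_n)μ(A_n), converges in distribution to the exponential law: sup_{t ≥ 0} |μ({x : λ(A_n)μ(A_n)τ_{A_n}(x) > t}) − e^{−t}| → 0 as n → ∞. Moreover, this convergence is uniform over any family of sequences (A_n) for which the convergence μ(τ_{A_n} ≤ n) → 0 is uniform. -/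
open MeasureTheory Filter Set
open scoped ENNReal Topology

set_option maxHeartbeats 1000000

noncomputable section

/-- First hitting time (at time ≥ 1) of the set `A` under `T`, valued in `ℕ∞`. -/
def hitTime {X : Type*} (T : X → X) (A : Set X) (x : X) : ℕ∞ :=
  ⨅ k ∈ {k : ℕ | 1 ≤ k ∧ T^[k] x ∈ A}, (k : ℕ∞)

/-- The shift map on one-sided sequences. -/
def shift (𝒜 : Type*) : (ℕ → 𝒜) → (ℕ → 𝒜) := fun x n => x (n + 1)

/-- The σ-algebra `ℱ_m^n` generated by the coordinates `m, …, n`. -/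
def coordSigma (𝒜 : Type*) [m𝒜 : MeasurableSpace 𝒜] (m n : ℕ) :
    MeasurableSpace (ℕ → 𝒜) :=
  ⨆ i ∈ Set.Icc m n, m𝒜.comap (fun x => x i)

/-- The α-mixing coefficient `α(g)`. -/
def alphaMix {𝒜 : Type*} [MeasurableSpace 𝒜] (μ : Measure (ℕ → 𝒜)) (g : ℕ) : ℝ :=
  ⨆ m : ℕ, ⨆ n : ℕ,
    ⨆ A : {A : Set (ℕ → 𝒜) // MeasurableSet[coordSigma 𝒜 0 n] A},
      ⨆ B : {B : Set (ℕ → 𝒜) // MeasurableSet[coordSigma 𝒜 (n + g) (m + g)] B},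
        |(μ ((A : Set (ℕ → 𝒜)) ∩ B)).toReal - (μ A).toReal * (μ B).toReal|

namespace HTEL

variable {𝒜 : Type*} [m𝒜 : MeasurableSpace 𝒜]
set_option linter.unusedSectionVars false

lemma shift_iterate_apply (k : ℕ) (x : ℕ → 𝒜) (j : ℕ) : (shift 𝒜)^[k] x j = x (j + k) := by
  induction k generalizing x j with
  | zero => simp
  | succ k ih =>
    rw [Function.iterate_succ_apply, ih]
    rfl

lemma coordSigma_le (a b : ℕ) : coordSigma 𝒜 a b ≤ (inferInstance : MeasurableSpace (ℕ → 𝒜)) :=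
  iSup₂_le fun i _ => measurable_iff_comap_le.1 (measurable_pi_apply i)

lemma measurableSet_of_coord {a b : ℕ} {s : Set (ℕ → 𝒜)}
    (h : MeasurableSet[coordSigma 𝒜 a b] s) : MeasurableSet s :=
  coordSigma_le a b _ h

lemma coordSigma_mono {a a' b b' : ℕ} (ha : a' ≤ a) (hb : b ≤ b') :
    coordSigma 𝒜 a b ≤ coordSigma 𝒜 a' b' :=
  iSup₂_le fun i hi =>
    le_iSup₂ (f := fun (j : ℕ) (_ : j ∈ Set.Icc a' b') => m𝒜.comap (fun x : ℕ → 𝒜 => x j)) i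
      (Icc_subset_Icc ha hb hi)

lemma coordSigma_preimage_shift {a b : ℕ} (k : ℕ) {s : Set (ℕ → 𝒜)}
    (hs : MeasurableSet[coordSigma 𝒜 a b] s) :
    MeasurableSet[coordSigma 𝒜 (a + k) (b + k)] ((shift 𝒜)^[k] ⁻¹' s) := by
  have hle : (coordSigma 𝒜 a b).comap ((shift 𝒜)^[k]) ≤ coordSigma 𝒜 (a + k) (b + k) := by
    rw [coordSigma, MeasurableSpace.comap_iSup]
    refine iSup_le fun i => ?_
    rw [MeasurableSpace.comap_iSup]
    refine iSup_le fun hi => ?_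
    rw [MeasurableSpace.comap_comp]
    have heq : ((fun x : ℕ → 𝒜 => x i) ∘ (shift 𝒜)^[k]) = fun x => x (i + k) := by
      funext x; exact shift_iterate_apply k x i
    rw [heq]
    exact le_iSup₂ (f := fun (j : ℕ) (_ : j ∈ Set.Icc (a + k) (b + k)) =>
      m𝒜.comap (fun x : ℕ → 𝒜 => x j)) (i + k)
      ⟨Nat.add_le_add_right hi.1 k, Nat.add_le_add_right hi.2 k⟩
  exact hle _ (MeasurableSpace.measurableSet_comap.2 ⟨s, hs, rfl⟩)

lemma hitTime_gt_iff {X : Type*} (T : X → X) (A : Set X) (x : X) (k : ℕ) :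
    (k : ℕ∞) < hitTime T A x ↔ ∀ j, 1 ≤ j → j ≤ k → T^[j] x ∉ A := by
  constructor
  · intro h j h1 hk hmem
    have hle : hitTime T A x ≤ (j : ℕ∞) :=
      iInf₂_le (f := fun (j : ℕ) (_ : j ∈ {k : ℕ | 1 ≤ k ∧ T^[k] x ∈ A}) => (j : ℕ∞)) j ⟨h1, hmem⟩
    have h2 : (k : ℕ∞) < (j : ℕ∞) := lt_of_lt_of_le h hle
    exact absurd (Nat.cast_le.2 hk) (not_le.2 h2)
  · intro h
    have hk1 : ((k + 1 : ℕ) : ℕ∞) ≤ hitTime T A x := by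
      refine le_iInf₂ fun j hj => ?_
      obtain ⟨h1, hmem⟩ := hj
      have : k < j := by
        by_contra hc
        exact h j h1 (not_lt.1 hc) hmem
      exact_mod_cast this
    exact lt_of_lt_of_le (Nat.cast_lt.2 (Nat.lt_succ_self k)) hk1

lemma hitTime_pos {X : Type*} (T : X → X) (A : Set X) (x : X) : (0 : ℕ∞) < hitTime T A x := by
  rw [show ((0:ℕ∞)) = ((0:ℕ) : ℕ∞) by simp, hitTime_gt_iff]
  intro j h1 h0
  omega

/-- the event `τ_A > s`. -/
def ET (A : Set (ℕ → 𝒜)) (s : ℕ) : Set (ℕ → 𝒜) := {x | (s : ℕ∞) < hitTime (shift 𝒜) A x}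

lemma mem_ET_iff {A : Set (ℕ → 𝒜)} {s : ℕ} {x : ℕ → 𝒜} :
    x ∈ ET A s ↔ ∀ j, 1 ≤ j → j ≤ s → (shift 𝒜)^[j] x ∉ A := hitTime_gt_iff _ _ _ _

lemma ET_zero (A : Set (ℕ → 𝒜)) : ET A 0 = univ := by
  ext x; simp only [mem_ET_iff, mem_univ, iff_true]
  intro j h1 h0; omega

lemma ET_eq_iInter (A : Set (ℕ → 𝒜)) (s : ℕ) :
    ET A s = ⋂ j ∈ Set.Icc 1 s, (shift 𝒜)^[j] ⁻¹' Aᶜ := by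
  ext x
  simp only [mem_ET_iff, mem_iInter, Set.mem_Icc, mem_preimage, mem_compl_iff]
  exact ⟨fun h j hj => h j hj.1 hj.2, fun h j h1 h2 => h j ⟨h1, h2⟩⟩

lemma ET_compl_eq (A : Set (ℕ → 𝒜)) (s : ℕ) :
    (ET A s)ᶜ = ⋃ j ∈ Finset.Icc 1 s, (shift 𝒜)^[j] ⁻¹' A := by
  ext x
  simp only [mem_compl_iff, mem_ET_iff, mem_iUnion, Finset.mem_Icc, mem_preimage]
  push_neg
  exact ⟨fun ⟨j, h1, h2, h3⟩ => ⟨j, ⟨h1, h2⟩, h3⟩, fun ⟨j, ⟨h1, h2⟩, h3⟩ => ⟨j, h1, h2, h3⟩⟩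

lemma ET_add (A : Set (ℕ → 𝒜)) (s t : ℕ) :
    ET A (s + t) = ET A s ∩ (shift 𝒜)^[s] ⁻¹' (ET A t) := by
  ext x
  simp only [mem_ET_iff, mem_inter_iff, mem_preimage]
  constructor
  · intro h
    refine ⟨fun j h1 h2 => h j h1 (by omega), fun j h1 h2 => ?_⟩
    rw [← Function.iterate_add_apply]
    exact h (j + s) (by omega) (by omega)
  · rintro ⟨h1, h2⟩ j hj1 hj2
    rcases le_or_gt j s with hc | hc
    · exact h1 j hj1 hc
    · have : j = (j - s) + s := by omega
      rw [this, Function.iterate_add_apply]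
      exact h2 (j - s) (by omega) (by omega)

lemma ET_antitone (A : Set (ℕ → 𝒜)) {s t : ℕ} (h : t ≤ s) : ET A s ⊆ ET A t := by
  intro x hx
  rw [mem_ET_iff] at hx ⊢
  exact fun j h1 h2 => hx j h1 (le_trans h2 h)

lemma ET_measurable_coord {A : Set (ℕ → 𝒜)} {M : ℕ}
    (hA : MeasurableSet[coordSigma 𝒜 0 M] A) (s : ℕ) :
    MeasurableSet[coordSigma 𝒜 0 (s + M)] (ET A s) := by
  rw [ET_eq_iInter]
  refine MeasurableSet.biInter (Set.finite_Icc 1 s).countable fun j hj => ?_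
  have hj' : 1 ≤ j ∧ j ≤ s := hj
  have h1 : MeasurableSet[coordSigma 𝒜 (0 + j) (M + j)] ((shift 𝒜)^[j] ⁻¹' Aᶜ) :=
    coordSigma_preimage_shift j hA.compl
  exact coordSigma_mono (by omega) (by omega) _ h1

lemma ET_measurable {A : Set (ℕ → 𝒜)} {M : ℕ}
    (hA : MeasurableSet[coordSigma 𝒜 0 M] A) (s : ℕ) : MeasurableSet (ET A s) :=
  measurableSet_of_coord (ET_measurable_coord hA s)


lemma exp_diff_le {a b : ℝ} (ha : 0 ≤ a) (hab : a ≤ b) :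
    Real.exp (-a) - Real.exp (-b) ≤ b - a := by
  have e1 : Real.exp (-b) = Real.exp (-a) * Real.exp (a - b) := by rw [← Real.exp_add]; ring_nf
  have e2 := Real.add_one_le_exp (a - b)
  have e3 : Real.exp (-a) ≤ 1 := Real.exp_le_one_iff.2 (by linarith)
  have e4 := (Real.exp_pos (-a)).le
  nlinarith [mul_le_mul_of_nonneg_left e2 e4]

lemma ofReal_lt_mul_iff {c t : ℝ} (hc : 0 < c) (ht : 0 ≤ t) (τ : ℕ∞) (hτ : 0 < τ) :
    ENNReal.ofReal t < ENNReal.ofReal c * (τ : ℝ≥0∞) ↔ ((⌊t / c⌋₊ : ℕ) : ℕ∞) < τ := by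
  induction τ using ENat.recTopCoe with
  | top =>
    refine iff_of_true ?_ ?_
    · rw [ENat.toENNReal_top, ENNReal.mul_top (ENNReal.ofReal_pos.2 hc).ne']
      exact ENNReal.ofReal_lt_top
    · exact lt_of_le_of_ne le_top (by simp)
  | coe j =>
    have hj : 0 < j := by exact_mod_cast hτ
    have hj1 : (1:ℝ) ≤ (j:ℝ) := by exact_mod_cast hj
    rw [ENat.toENNReal_coe]
    rw [show ((j:ℕ):ℝ≥0∞) = ENNReal.ofReal ((j:ℕ):ℝ) by simp]
    rw [← ENNReal.ofReal_mul hc.le]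
    rw [ENNReal.ofReal_lt_ofReal_iff (by nlinarith : (0:ℝ) < c * (j:ℝ))]
    rw [Nat.cast_lt]
    have h1 : (⌊t / c⌋₊ < j) ↔ t / c < (j:ℝ) := Nat.floor_lt (div_nonneg ht hc.le)
    have h2 : t / c < (j:ℝ) ↔ t < (j:ℝ) * c := div_lt_iff₀ hc
    constructor
    · intro h
      exact h1.2 (h2.2 (by linarith))
    · intro h
      have := h2.1 (h1.1 h)
      linarith

section Meas

variable (μ : Measure (ℕ → 𝒜)) [IsProbabilityMeasure μ]

lemma mreal_nonneg (s : Set (ℕ → 𝒜)) : 0 ≤ (μ s).toReal := ENNReal.toReal_nonneg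

lemma mreal_le_one (s : Set (ℕ → 𝒜)) : (μ s).toReal ≤ 1 := by
  have := prob_le_one (μ := μ) (s := s)
  simpa using ENNReal.toReal_mono (by simp) this

lemma mreal_mono {s t : Set (ℕ → 𝒜)} (h : s ⊆ t) : (μ s).toReal ≤ (μ t).toReal :=
  ENNReal.toReal_mono (measure_ne_top μ t) (measure_mono h)

lemma mreal_union_le (s t : Set (ℕ → 𝒜)) :
    (μ (s ∪ t)).toReal ≤ (μ s).toReal + (μ t).toReal := by
  have h := measure_union_le (μ := μ) s t
  have := ENNReal.toReal_mono (by finiteness) h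
  rwa [ENNReal.toReal_add (measure_ne_top μ s) (measure_ne_top μ t)] at this

lemma mreal_compl {s : Set (ℕ → 𝒜)} (hs : MeasurableSet s) :
    (μ sᶜ).toReal = 1 - (μ s).toReal := by
  rw [measure_compl hs (measure_ne_top μ s), measure_univ,
    ENNReal.toReal_sub_of_le (prob_le_one) (by simp)]
  simp

lemma mreal_add_diff {s t : Set (ℕ → 𝒜)} (ht : MeasurableSet t) :
    (μ (s ∩ t)).toReal + (μ (s \ t)).toReal = (μ s).toReal := by
  rw [← ENNReal.toReal_add (measure_ne_top _ _) (measure_ne_top _ _),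
    measure_inter_add_diff s ht]

lemma abs_term_le_one (s t : Set (ℕ → 𝒜)) :
    |(μ (s ∩ t)).toReal - (μ s).toReal * (μ t).toReal| ≤ 1 := by
  have h1 := mreal_nonneg μ (s ∩ t); have h2 := mreal_le_one μ (s ∩ t)
  have h3 := mreal_nonneg μ s; have h4 := mreal_le_one μ s
  have h5 := mreal_nonneg μ t; have h6 := mreal_le_one μ t
  rw [abs_le]
  constructor <;> nlinarith

lemma step1 (g n' m' : ℕ) {S B : Set (ℕ → 𝒜)}
    (hS : MeasurableSet[coordSigma 𝒜 0 n'] S)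
    (hB : MeasurableSet[coordSigma 𝒜 (n' + g) (m' + g)] B) :
    |(μ (S ∩ B)).toReal - (μ S).toReal * (μ B).toReal| ≤ alphaMix μ g := by
  set F2 : (n m : ℕ) → {A : Set (ℕ → 𝒜) // MeasurableSet[coordSigma 𝒜 0 n] A} → ℝ :=
    fun n m A' => ⨆ B' : {B : Set (ℕ → 𝒜) // MeasurableSet[coordSigma 𝒜 (n + g) (m + g)] B},
        |(μ ((A' : Set (ℕ → 𝒜)) ∩ B')).toReal - (μ A').toReal * (μ B').toReal| with hF2
  have hb1 : ∀ n m A', F2 n m A' ≤ 1 :=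
    fun n m A' => Real.iSup_le (fun B' => abs_term_le_one μ _ _) zero_le_one
  have h1 : |(μ (S ∩ B)).toReal - (μ S).toReal * (μ B).toReal| ≤ F2 n' m' ⟨S, hS⟩ := by
    refine le_ciSup_of_le ⟨1, ?_⟩ (⟨B, hB⟩ :
      {B : Set (ℕ → 𝒜) // MeasurableSet[coordSigma 𝒜 (n' + g) (m' + g)] B}) le_rfl
    rintro y ⟨B', rfl⟩; exact abs_term_le_one μ _ _
  set F1 : (n m : ℕ) → ℝ := fun n m => ⨆ A', F2 n m A' with hF1
  have hb2 : ∀ n m, F1 n m ≤ 1 := fun n m => Real.iSup_le (hb1 n m) zero_le_one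
  have h2 : F2 n' m' ⟨S, hS⟩ ≤ F1 n' m' := by
    refine le_ciSup_of_le ⟨1, ?_⟩ ⟨S, hS⟩ le_rfl
    rintro y ⟨A', rfl⟩; exact hb1 _ _ _
  set F0 : (m : ℕ) → ℝ := fun m => ⨆ n, F1 n m with hF0
  have hb3 : ∀ m, F0 m ≤ 1 := fun m => Real.iSup_le (fun n => hb2 n m) zero_le_one
  have h3 : F1 n' m' ≤ F0 m' := by
    refine le_ciSup_of_le ⟨1, ?_⟩ n' le_rfl
    rintro y ⟨n, rfl⟩; exact hb2 _ _
  have h4 : F0 m' ≤ alphaMix μ g := by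
    refine le_ciSup_of_le ⟨1, ?_⟩ m' le_rfl
    rintro y ⟨m, rfl⟩; exact hb3 _
  exact h1.trans (h2.trans (h3.trans h4))

lemma alphaMix_nonneg (g : ℕ) : 0 ≤ alphaMix μ g := by
  have := step1 μ g 0 0 (S := ∅) (B := ∅) (@MeasurableSet.empty _ (coordSigma 𝒜 0 0)) (@MeasurableSet.empty _ (coordSigma 𝒜 (0+g) (0+g)))
  exact le_trans (abs_nonneg _) this


/-- `fr μ A s = μ(τ_A > s)` as a real number. -/
def fr (A : Set (ℕ → 𝒜)) (s : ℕ) : ℝ := (μ (ET A s)).toReal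

variable {A : Set (ℕ → 𝒜)} {M : ℕ}

lemma fr_zero : fr μ A 0 = 1 := by
  rw [fr, ET_zero]; simp

lemma fr_nonneg (s : ℕ) : 0 ≤ fr μ A s := mreal_nonneg μ _

lemma fr_le_one (s : ℕ) : fr μ A s ≤ 1 := mreal_le_one μ _

lemma fr_antitone {s t : ℕ} (h : t ≤ s) : fr μ A s ≤ fr μ A t :=
  mreal_mono μ (ET_antitone A h)

lemma ET_one : ET A 1 = (shift 𝒜)^[1] ⁻¹' Aᶜ := by
  ext x
  simp only [mem_ET_iff, mem_preimage, mem_compl_iff]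
  constructor
  · intro h; exact h 1 le_rfl le_rfl
  · intro h j h1 h2
    have : j = 1 := by omega
    rwa [this]

lemma ET_diff_subset (A : Set (ℕ → 𝒜)) (s t : ℕ) :
    ET A s \ ET A (s + t) ⊆ (shift 𝒜)^[s] ⁻¹' (ET A t)ᶜ := by
  intro x hx
  rcases hx with ⟨h1, h2⟩
  rw [ET_add] at h2
  simp only [mem_inter_iff, not_and, mem_preimage, mem_compl_iff] at h2 ⊢
  exact h2 h1

variable (hT : MeasurePreserving (shift 𝒜) μ μ)
include hT

lemma minv (k : ℕ) {s : Set (ℕ → 𝒜)} (hs : MeasurableSet s) :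
    (μ ((shift 𝒜)^[k] ⁻¹' s)).toReal = (μ s).toReal := by
  rw [(hT.iterate k).measure_preimage hs.nullMeasurableSet]

lemma fr_one (hA : MeasurableSet[coordSigma 𝒜 0 M] A) : fr μ A 1 = 1 - (μ A).toReal := by
  rw [fr, ET_one, minv μ hT 1 (measurableSet_of_coord hA).compl,
    mreal_compl μ (measurableSet_of_coord hA)]

lemma fr_sub_le (hA : MeasurableSet[coordSigma 𝒜 0 M] A) (s t : ℕ) :
    fr μ A s - fr μ A (s + t) ≤ 1 - fr μ A t := by
  have hmeas := ET_measurable hA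
  have hdiff : (μ (ET A s \ ET A (s + t))).toReal ≤ 1 - fr μ A t := by
    calc (μ (ET A s \ ET A (s + t))).toReal
        ≤ (μ ((shift 𝒜)^[s] ⁻¹' (ET A t)ᶜ)).toReal := mreal_mono μ (ET_diff_subset A s t)
      _ = (μ (ET A t)ᶜ).toReal := minv μ hT s (hmeas t).compl
      _ = 1 - fr μ A t := mreal_compl μ (hmeas t)
  have hadd := mreal_add_diff μ (s := ET A s) (hmeas (s + t))
  rw [inter_eq_right.2 (ET_antitone A (Nat.le_add_right s t))] at hadd
  have : fr μ A (s + t) + (μ (ET A s \ ET A (s + t))).toReal = fr μ A s := hadd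
  linarith

lemma one_sub_fr_le (hA : MeasurableSet[coordSigma 𝒜 0 M] A) (s : ℕ) :
    1 - fr μ A s ≤ s * (μ A).toReal := by
  have hmeas := ET_measurable hA
  have h1 : (μ (ET A s)ᶜ) ≤ s * μ A := by
    rw [ET_compl_eq]
    refine le_trans (measure_biUnion_finset_le _ _) ?_
    have : ∀ j ∈ Finset.Icc 1 s, μ ((shift 𝒜)^[j] ⁻¹' A) = μ A := by
      intro j _
      exact (hT.iterate j).measure_preimage (measurableSet_of_coord hA).nullMeasurableSet
    rw [Finset.sum_congr rfl this, Finset.sum_const, Nat.card_Icc, nsmul_eq_mul]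
    simp
  have h2 : (μ (ET A s)ᶜ).toReal ≤ s * (μ A).toReal := by
    have := ENNReal.toReal_mono (by finiteness) h1
    rw [ENNReal.toReal_mul] at this
    simpa using this
  rw [mreal_compl μ (hmeas s)] at h2
  exact h2

lemma fr_step_le (hA : MeasurableSet[coordSigma 𝒜 0 M] A) (s : ℕ) :
    fr μ A s - fr μ A (s + 1) ≤ (μ A).toReal := by
  have hmeas := ET_measurable hA
  have hsub : ET A s \ ET A (s + 1) ⊆ (shift 𝒜)^[s + 1] ⁻¹' A := by
    intro x hx
    rcases hx with ⟨h1, h2⟩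
    rw [mem_ET_iff] at h1 h2
    push_neg at h2
    obtain ⟨j, hj1, hj2, hj3⟩ := h2
    have : j = s + 1 := by
      by_contra hc
      exact (h1 j hj1 (by omega)) hj3
    rw [mem_preimage, ← this]; exact hj3
  have hd : (μ (ET A s \ ET A (s + 1))).toReal ≤ (μ A).toReal := by
    calc (μ (ET A s \ ET A (s + 1))).toReal
        ≤ (μ ((shift 𝒜)^[s + 1] ⁻¹' A)).toReal := mreal_mono μ hsub
      _ = (μ A).toReal := minv μ hT (s + 1) (measurableSet_of_coord hA)
  have hadd := mreal_add_diff μ (s := ET A s) (hmeas (s + 1))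
  rw [inter_eq_right.2 (ET_antitone A (Nat.le_add_right s 1))] at hadd
  have : fr μ A (s + 1) + (μ (ET A s \ ET A (s + 1))).toReal = fr μ A s := hadd
  linarith

/-- the key mixing estimate -/
lemma key_est (hA : MeasurableSet[coordSigma 𝒜 0 M] A) (s t g : ℕ) :
    |fr μ A (s + (M + 1 + g) + t) - fr μ A s * fr μ A t|
      ≤ (1 - fr μ A (M + 1 + g)) + alphaMix μ g ∧
    fr μ A (s + (M + 1 + g) + t) ≤ fr μ A s * fr μ A t + alphaMix μ g := by
  have hmeas := ET_measurable hA
  set G := M + 1 + g with hG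
  set B := (shift 𝒜)^[s + G] ⁻¹' (ET A t) with hBdef
  have hcoord : MeasurableSet[coordSigma 𝒜 ((s + M) + g) ((t + M + s + M + 1) + g)] B := by
    have h0 := coordSigma_preimage_shift (s + G) (ET_measurable_coord hA t)
    exact coordSigma_mono (by omega) (by omega) _ h0
  have hmixterm := step1 μ g (s + M) (t + M + s + M + 1) (ET_measurable_coord hA s) hcoord
  have hrB : (μ B).toReal = fr μ A t := minv μ hT (s + G) (hmeas t)
  rw [hrB] at hmixterm
  have heq : ET A (s + G + t) = ET A (s + G) ∩ B := ET_add A (s + G) t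
  have hupper : fr μ A (s + G + t) ≤ (μ (ET A s ∩ B)).toReal := by
    rw [fr, heq]
    exact mreal_mono μ (inter_subset_inter_left B (ET_antitone A (Nat.le_add_right s G)))
  have hlower : (μ (ET A s ∩ B)).toReal ≤ fr μ A (s + G + t) + (1 - fr μ A G) := by
    have hsub : ET A s ∩ B ⊆ (ET A (s + G) ∩ B) ∪ (ET A s \ ET A (s + G)) := by
      intro x hx
      rcases hx with ⟨h1, h2⟩
      by_cases hc : x ∈ ET A (s + G)
      · exact Or.inl ⟨hc, h2⟩
      · exact Or.inr ⟨h1, hc⟩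
    have hdiff : (μ (ET A s \ ET A (s + G))).toReal ≤ 1 - fr μ A G := by
      calc (μ (ET A s \ ET A (s + G))).toReal
          ≤ (μ ((shift 𝒜)^[s] ⁻¹' (ET A G)ᶜ)).toReal := mreal_mono μ (ET_diff_subset A s G)
        _ = (μ (ET A G)ᶜ).toReal := minv μ hT s (hmeas G).compl
        _ = 1 - fr μ A G := mreal_compl μ (hmeas G)
    calc (μ (ET A s ∩ B)).toReal
        ≤ (μ ((ET A (s + G) ∩ B) ∪ (ET A s \ ET A (s + G)))).toReal := mreal_mono μ hsub
      _ ≤ (μ (ET A (s + G) ∩ B)).toReal + (μ (ET A s \ ET A (s + G))).toReal :=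
          mreal_union_le μ _ _
      _ ≤ fr μ A (s + G + t) + (1 - fr μ A G) := by
          rw [fr, heq]; linarith
  have e1 : (μ (ET A s)).toReal = fr μ A s := rfl
  rw [e1] at hmixterm
  have habs := abs_le.1 hmixterm
  have hfrG : fr μ A G ≤ 1 := fr_le_one μ G
  constructor
  · rw [abs_le]
    constructor <;> linarith
  · linarith


lemma exists_K_half (hmix : Tendsto (alphaMix μ) atTop (𝓝 0))
    (hA : MeasurableSet[coordSigma 𝒜 0 M] A) (hp : 0 < (μ A).toReal) :
    ∃ K, fr μ A K ≤ 1 / 2 := by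
  set p := (μ A).toReal with hpdef
  have hp1 : p ≤ 1 := mreal_le_one μ A
  obtain ⟨g, hg⟩ : ∃ g, alphaMix μ g < p / 4 :=
    (hmix.eventually (gt_mem_nhds (by positivity : (0:ℝ) < p / 4))).exists
  have hα0 := alphaMix_nonneg μ g
  set Q := (M + 1 + g) + 1 with hQ
  have hstep : ∀ k : ℕ, fr μ A (k * Q) ≤ (1 - p) ^ k + 1 / 4 := by
    intro k
    induction k with
    | zero => rw [Nat.zero_mul, fr_zero]; norm_num
    | succ k ih =>
      have hkey := (key_est μ hT hA (k * Q) 1 g).2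
      rw [fr_one μ hT hA] at hkey
      have hidx : k * Q + (M + 1 + g) + 1 = (k + 1) * Q := by rw [hQ]; ring
      rw [hidx] at hkey
      have h0 : 0 ≤ fr μ A (k * Q) := fr_nonneg μ _
      have h1p : (0:ℝ) ≤ 1 - p := by linarith
      have hpw : (0:ℝ) ≤ (1 - p) ^ k := pow_nonneg h1p k
      have hps : (1 - p) ^ (k + 1) = (1 - p) ^ k * (1 - p) := pow_succ _ _
      nlinarith
  have h1p : (0:ℝ) ≤ 1 - p := by linarith
  obtain ⟨k, hk⟩ : ∃ k, (1 - p) ^ k < 1 / 4 :=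
    ((tendsto_pow_atTop_nhds_zero_of_lt_one h1p (by linarith)).eventually
      (gt_mem_nhds (by norm_num : (0:ℝ) < 1 / 4))).exists
  exact ⟨k * Q, by linarith [hstep k]⟩

lemma exists_good_lam (hmix : Tendsto (alphaMix μ) atTop (𝓝 0))
    (hA : MeasurableSet[coordSigma 𝒜 0 M] A) {g : ℕ} {ε η : ℝ}
    (hp0 : 0 < (μ A).toReal)
    (hη0 : 0 < η) (hη8 : η ≤ 1 / 8) (hεη : ε ≤ η ^ 2)
    (herr : (1 - fr μ A (M + 1 + g)) + alphaMix μ g ≤ ε)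
    (hpε : (μ A).toReal ≤ ε) :
    ∃ l, l ∈ Set.Ioc (0:ℝ) 2 ∧ ∀ t : ℝ, 0 ≤ t →
      |(μ {x | ENNReal.ofReal t < ENNReal.ofReal l * μ A *
          (hitTime (shift 𝒜) A x : ℝ≥0∞)}).toReal - Real.exp (-t)| ≤ 6 * η := by
  classical
  set p := (μ A).toReal with hpdef
  have hp1 : p ≤ 1 := mreal_le_one μ A
  have hε0 : 0 < ε := lt_of_lt_of_le hp0 hpε
  have hpη : p ≤ η := by nlinarith
  have hδη : ε / η ≤ η := by rw [div_le_iff₀ hη0]; nlinarith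
  have hδ0 : 0 ≤ ε / η := by positivity
  have hδmul : (ε / η) * η = ε := div_mul_cancel₀ ε (ne_of_gt hη0)
  -- minimal L with fr ≤ 1 - η
  have hex : ∃ K, fr μ A K ≤ 1 - η := by
    obtain ⟨K, hK⟩ := exists_K_half μ hT hmix hA hp0
    exact ⟨K, by linarith⟩
  set L := Nat.find hex with hLdef
  have hL : fr μ A L ≤ 1 - η := Nat.find_spec hex
  have hL1 : 1 ≤ L := by
    by_contra hc
    have h0 : L = 0 := by omega
    rw [h0, fr_zero] at hL
    linarith
  have hLpred : 1 - η < fr μ A (L - 1) := by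
    have hmin := Nat.find_min hex (m := L - 1) (by omega)
    linarith [not_le.1 hmin]
  have hstepL := fr_step_le μ hT hA (L - 1)
  rw [show L - 1 + 1 = L by omega] at hstepL
  set F := fr μ A L with hF
  have hF1 : F ≤ 1 - η := hL
  have hFlow : 1 - η - p ≤ F := by linarith
  have hFhalf : 1 / 2 ≤ F := by linarith
  have hFpos : 0 < F := by linarith
  set G := M + 1 + g with hG
  set L' := L + G with hL'
  have hL'1 : 1 ≤ L' := by omega
  have hL'pos : (0:ℝ) < (L' : ℝ) := by exact_mod_cast hL'1
  have h1F : 1 - F ≤ (L' : ℝ) * p := by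
    have hub := one_sub_fr_le μ hT hA L
    have hcast : (L : ℝ) ≤ (L' : ℝ) := by exact_mod_cast Nat.le_add_right L G
    nlinarith
  have h1Fη : η ≤ 1 - F := by linarith
  -- lambda
  set l := (- Real.log F) / (p * (L' : ℝ)) with hldef
  have hplpos : 0 < p * (L' : ℝ) := by positivity
  have hlogpos : 0 < - Real.log F := by
    have : Real.log F < 0 := Real.log_neg hFpos (by linarith)
    linarith
  have hl0 : 0 < l := div_pos hlogpos hplpos
  have hlogle : - Real.log F ≤ 2 * (1 - F) := by
    have h1 := Real.log_le_sub_one_of_pos (x := F⁻¹) (by positivity)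
    rw [Real.log_inv] at h1
    have h2 : F⁻¹ - 1 = (1 - F) / F := by field_simp
    rw [h2] at h1
    have h1' : (- Real.log F) * F ≤ 1 - F := (le_div_iff₀ hFpos).1 h1
    nlinarith
  have hl2 : l ≤ 2 := by
    rw [hldef, div_le_iff₀ hplpos]
    nlinarith
  set c := l * p with hc
  have hc0 : 0 < c := mul_pos hl0 hp0
  have hcη : c ≤ 2 * η := by nlinarith
  have hexpF : Real.exp (-(c * (L' : ℝ))) = F := by
    rw [hc, hldef]
    have : -(- Real.log F / (p * (L' : ℝ)) * p * (L' : ℝ)) = Real.log F := by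
      field_simp
    rw [this, Real.exp_log hFpos]
  -- grid estimate
  have hgrid : ∀ k : ℕ, |fr μ A (k * L') - F ^ k| ≤ (ε / η) * (1 - F ^ k) := by
    intro k
    induction k with
    | zero => simp [fr_zero]
    | succ k ih =>
      have hkey := (key_est μ hT hA (k * L') L g).1
      have hidx : k * L' + (M + 1 + g) + L = (k + 1) * L' := by rw [hL', hG]; ring
      rw [hidx] at hkey
      have hkey' : |fr μ A ((k + 1) * L') - fr μ A (k * L') * F| ≤ ε := le_trans hkey herr
      have hFk1 : F ^ k ≤ 1 := pow_le_one₀ hFpos.le (by linarith)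
      have hFk0 : 0 ≤ F ^ k := pow_nonneg hFpos.le k
      have hps : F ^ (k + 1) = F ^ k * F := pow_succ _ _
      have habs1 := abs_le.1 hkey'
      have habs2 := abs_le.1 ih
      have hm1 : F * (fr μ A (k * L') - F ^ k) ≤ F * ((ε / η) * (1 - F ^ k)) :=
        mul_le_mul_of_nonneg_left habs2.2 hFpos.le
      have hm2 : F * (-((ε / η) * (1 - F ^ k))) ≤ F * (fr μ A (k * L') - F ^ k) :=
        mul_le_mul_of_nonneg_left habs2.1 hFpos.le
      rw [abs_le]
      constructor <;> nlinarith
  -- integer estimate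
  have hFpow : ∀ k : ℕ, Real.exp (-(c * ((k * L' : ℕ) : ℝ))) = F ^ k := by
    intro k
    have h1 : -(c * ((k * L' : ℕ) : ℝ)) = (k : ℝ) * (-(c * (L' : ℝ))) := by push_cast; ring
    rw [h1, Real.exp_nat_mul, hexpF]
  have hint : ∀ m : ℕ, |fr μ A m - Real.exp (-(c * (m : ℝ)))| ≤ 4 * η := by
    intro m
    set k := m / L' with hk
    have hk1 : k * L' ≤ m := Nat.div_mul_le_self m L'
    have hk2 : m < (k + 1) * L' := by
      have hmod := Nat.div_add_mod m L'
      have hmlt := Nat.mod_lt m (show 0 < L' by omega)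
      calc m = L' * k + m % L' := (Nat.div_add_mod m L').symm
        _ < L' * k + L' := by omega
        _ = (k + 1) * L' := by ring
    have hFk1 : F ^ k ≤ 1 := pow_le_one₀ hFpos.le (by linarith)
    have hFk0 : 0 ≤ F ^ k := pow_nonneg hFpos.le k
    have hps : F ^ (k + 1) = F ^ k * F := pow_succ _ _
    have hg1 := abs_le.1 (hgrid k)
    have hg2 := abs_le.1 (hgrid (k + 1))
    have hf_up : fr μ A m ≤ fr μ A (k * L') := fr_antitone μ hk1
    have hf_dn : fr μ A ((k + 1) * L') ≤ fr μ A m := fr_antitone μ (le_of_lt hk2)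
    have hδ1 : (ε / η) * (1 - F ^ k) ≤ ε / η := by nlinarith
    have hδ2 : (ε / η) * (1 - F ^ (k + 1)) ≤ ε / η := by nlinarith
    have hexp_up : Real.exp (-(c * (m : ℝ))) ≤ F ^ k := by
      rw [← hFpow k]
      exact Real.exp_le_exp.2 (neg_le_neg
        (mul_le_mul_of_nonneg_left (by exact_mod_cast hk1) hc0.le))
    have hexp_dn : F ^ (k + 1) ≤ Real.exp (-(c * (m : ℝ))) := by
      rw [← hFpow (k + 1)]
      exact Real.exp_le_exp.2 (neg_le_neg
        (mul_le_mul_of_nonneg_left (by exact_mod_cast (le_of_lt hk2)) hc0.le))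
    have hA1 : F ^ (k + 1) - ε / η ≤ fr μ A m := by linarith [hg2.1]
    have hA2 : fr μ A m ≤ F ^ k + ε / η := by linarith [hg1.2]
    have hB : F ^ k - F ^ (k + 1) ≤ 1 - F := by
      have h0 : (0:ℝ) ≤ 1 - F := by linarith
      calc F ^ k - F ^ (k + 1) = (1 - F) * F ^ k := by rw [hps]; ring
        _ ≤ (1 - F) * 1 := mul_le_mul_of_nonneg_left hFk1 h0
        _ = 1 - F := mul_one _
    rw [abs_le]
    constructor <;> linarith
  -- final: real t
  refine ⟨l, ⟨hl0, hl2⟩, fun t ht => ?_⟩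
  set m := ⌊t / c⌋₊ with hmdef
  have hset : {x | ENNReal.ofReal t < ENNReal.ofReal l * μ A *
      (hitTime (shift 𝒜) A x : ℝ≥0∞)} = ET A m := by
    have hμA : μ A = ENNReal.ofReal p := (ENNReal.ofReal_toReal (measure_ne_top μ A)).symm
    ext x
    simp only [mem_setOf_eq]
    rw [hμA, ← ENNReal.ofReal_mul hl0.le, ← hc]
    exact ofReal_lt_mul_iff hc0 ht _ (hitTime_pos (shift 𝒜) A x)
  rw [hset]
  have hfr : (μ (ET A m)).toReal = fr μ A m := rfl
  rw [hfr]
  have h1 := hint m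
  have hcm : c * (m:ℝ) ≤ t := by
    have hfl : ((m:ℕ):ℝ) ≤ t / c := Nat.floor_le (div_nonneg ht hc0.le)
    have := (le_div_iff₀ hc0).1 hfl
    linarith
  have hcm2 : t < c * ((m:ℝ) + 1) := by
    have hfl := Nat.lt_floor_add_one (t / c)
    have := (div_lt_iff₀ hc0).1 hfl
    linarith
  have hmono : Real.exp (-t) ≤ Real.exp (-(c * (m:ℝ))) := Real.exp_le_exp.2 (by linarith)
  have hdiff : Real.exp (-(c * (m:ℝ))) - Real.exp (-t) ≤ c := by
    have hcmpos : 0 ≤ c * (m:ℝ) := mul_nonneg hc0.le (Nat.cast_nonneg m)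
    have := exp_diff_le hcmpos (by linarith : c * (m:ℝ) ≤ t)
    linarith
  calc |fr μ A m - Real.exp (-t)|
      ≤ |fr μ A m - Real.exp (-(c * (m:ℝ)))| + |Real.exp (-(c * (m:ℝ))) - Real.exp (-t)| :=
        abs_sub_le _ _ _
    _ ≤ 4 * η + 2 * η := by
        have habs2 : |Real.exp (-(c * (m:ℝ))) - Real.exp (-t)| ≤ 2 * η := by
          rw [abs_of_nonneg (by linarith)]
          linarith
        linarith
    _ = 6 * η := by ring

end Meas
end HTEL

open HTEL

/-- **Hitting times of rare events are asymptotically exponential, uniformly over families.**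
For an α-mixing shift system, for any family (indexed by `ι`) of sequences of sets
`A i n ∈ ℱ_0^{n-1}` of positive measure such that `μ(τ_{A i n} ≤ n) → 0` uniformly in `i`,
there are constants `lam i n ∈ (0,2]` such that
`sup_{t ≥ 0} |μ(lam(A_n)μ(A_n)τ_{A_n} > t) − e^{−t}| → 0`, uniformly in `i`.
(Taking `ι` a singleton gives the statement for a single sequence.) -/
theorem hitting_time_exponential_law
    {𝒜 : Type*} [Countable 𝒜] [MeasurableSpace 𝒜] [DiscreteMeasurableSpace 𝒜]
    (μ : Measure (ℕ → 𝒜)) [IsProbabilityMeasure μ]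
    (hT : MeasurePreserving (shift 𝒜) μ μ)
    (hmix : Tendsto (alphaMix μ) atTop (𝓝 0))
    {ι : Type*} (A : ι → ℕ → Set (ℕ → 𝒜))
    (hAmeas : ∀ i n, MeasurableSet[coordSigma 𝒜 0 (n - 1)] (A i n))
    (hApos : ∀ i n, 0 < μ (A i n))
    (hshort : Tendsto
      (fun n => ⨆ i,
        (μ {x | hitTime (shift 𝒜) (A i n) x ≤ (n : ℕ∞)}).toReal) atTop (𝓝 0)) :
    ∃ lam : ι → ℕ → ℝ, (∀ i n, lam i n ∈ Set.Ioc (0 : ℝ) 2) ∧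
      Tendsto
        (fun n => ⨆ i, ⨆ t : {t : ℝ // 0 ≤ t},
          |(μ {x | ENNReal.ofReal (t : ℝ) <
              ENNReal.ofReal (lam i n) * μ (A i n) *
                (hitTime (shift 𝒜) (A i n) x : ℝ≥0∞)}).toReal -
            Real.exp (-(t : ℝ))|) atTop (𝓝 0) := by
  classical
  rcases isEmpty_or_nonempty ι with hι | hι
  · refine ⟨fun _ _ => 1, fun i n => by norm_num, ?_⟩
    have hz : ∀ n : ℕ, (⨆ i : ι, ⨆ t : {t : ℝ // 0 ≤ t},
        |(μ {x | ENNReal.ofReal (t : ℝ) <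
            ENNReal.ofReal (1 : ℝ) * μ (A i n) *
              (hitTime (shift 𝒜) (A i n) x : ℝ≥0∞)}).toReal -
          Real.exp (-(t : ℝ))|) = 0 := by
      intro n
      rw [iSup, Set.range_eq_empty, Real.sSup_empty]
    simpa [hz] using tendsto_const_nhds (x := (0:ℝ)) (f := (atTop : Filter ℕ))
  -- main case
  set s : ℕ → ℝ := fun n =>
    ⨆ i, (μ {x | hitTime (shift 𝒜) (A i n) x ≤ (n : ℕ∞)}).toReal with hsdef
  have hs0 : ∀ n, 0 ≤ s n := fun n => Real.iSup_nonneg fun i => ENNReal.toReal_nonneg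
  have hsbd : ∀ n i, (μ {x | hitTime (shift 𝒜) (A i n) x ≤ (n : ℕ∞)}).toReal ≤ s n := by
    intro n i
    simp only [hsdef]
    have hbdd : BddAbove (Set.range
        (fun i : ι => (μ {x | hitTime (shift 𝒜) (A i n) x ≤ (n : ℕ∞)}).toReal)) := by
      refine ⟨1, ?_⟩
      rintro y ⟨i', rfl⟩
      exact mreal_le_one μ _
    exact le_ciSup hbdd i
  set r : ℕ → ℝ := fun n => s n + 1 / ((n : ℝ) + 1) with hrdef
  have hr0 : ∀ n, 0 < r n := fun n => add_pos_of_nonneg_of_pos (hs0 n) (by positivity)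
  have hsr : ∀ n, s n ≤ r n := fun n => by
    have : (0:ℝ) < 1 / ((n:ℝ) + 1) := by positivity
    simp only [hrdef]; linarith
  have hrto : Tendsto r atTop (𝓝 0) := by
    have h2 : Tendsto (fun n : ℕ => 1 / ((n : ℝ) + 1)) atTop (𝓝 0) :=
      tendsto_one_div_add_atTop_nhds_zero_nat
    rw [hrdef]
    simpa using hshort.add h2
  set g : ℕ → ℕ := fun n => ⌊Real.sqrt (1 / r n)⌋₊ with hgdef
  have hgto : Tendsto g atTop atTop := by
    rw [tendsto_atTop]
    intro b
    have hev : ∀ᶠ n in atTop, r n < 1 / ((b : ℝ) + 1) ^ 2 :=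
      hrto.eventually (gt_mem_nhds (by positivity))
    filter_upwards [hev] with n hn
    have hb2 : ((b : ℝ) + 1) ^ 2 ≤ 1 / r n := by
      rw [le_div_iff₀ (hr0 n)]
      rw [lt_div_iff₀ (by positivity : (0:ℝ) < ((b : ℝ) + 1) ^ 2)] at hn
      linarith
    have h1 : ((b : ℝ)) ≤ Real.sqrt (1 / r n) := by
      have := Real.sqrt_le_sqrt hb2
      rw [Real.sqrt_sq (by positivity)] at this
      linarith
    exact Nat.le_floor h1
  set eps : ℕ → ℝ := fun n => (1 + (g n : ℝ)) * r n + alphaMix μ (g n) with hepsdef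
  have heps0 : ∀ n, 0 < eps n := by
    intro n
    have h1 : 0 < (1 + (g n : ℝ)) * r n := mul_pos (by positivity) (hr0 n)
    have h2 := alphaMix_nonneg μ (g n)
    simp only [hepsdef]; linarith
  have hepsto : Tendsto eps atTop (𝓝 0) := by
    have part1 : Tendsto (fun n => (1 + (g n : ℝ)) * r n) atTop (𝓝 0) := by
      have hub : ∀ n, (1 + (g n : ℝ)) * r n ≤ r n + Real.sqrt (r n) := by
        intro n
        have hg_le : (g n : ℝ) ≤ Real.sqrt (1 / r n) :=
          Nat.floor_le (Real.sqrt_nonneg _)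
        have hkey : Real.sqrt (1 / r n) * r n = Real.sqrt (r n) := by
          rw [one_div, Real.sqrt_inv, inv_mul_eq_div, Real.div_sqrt]
        have := mul_le_mul_of_nonneg_right hg_le (hr0 n).le
        rw [hkey] at this
        nlinarith [(hr0 n).le]
      have hlb : ∀ n, 0 ≤ (1 + (g n : ℝ)) * r n := fun n =>
        mul_nonneg (by positivity) (hr0 n).le
      have hupto : Tendsto (fun n => r n + Real.sqrt (r n)) atTop (𝓝 0) := by
        have hsq : Tendsto (fun n => Real.sqrt (r n)) atTop (𝓝 0) := by
          have := (Real.continuous_sqrt.tendsto 0).comp hrto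
          simpa [Function.comp_def] using this
        simpa using hrto.add hsq
      exact squeeze_zero hlb hub hupto
    have part2 : Tendsto (fun n => alphaMix μ (g n)) atTop (𝓝 0) := hmix.comp hgto
    simpa using part1.add part2
  set eta : ℕ → ℝ := fun n => min (1 / 8) (Real.sqrt (eps n)) with hetadef
  have heta0 : ∀ n, 0 < eta n := fun n =>
    lt_min (by norm_num) (Real.sqrt_pos.2 (heps0 n))
  have hetato : Tendsto eta atTop (𝓝 0) := by
    have hsq : Tendsto (fun n => Real.sqrt (eps n)) atTop (𝓝 0) := by
      have := (Real.continuous_sqrt.tendsto 0).comp hepsto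
      simpa [Function.comp_def] using this
    refine squeeze_zero (fun n => (heta0 n).le) (fun n => min_le_right _ _) hsq
  set P : ι → ℕ → ℝ → Prop := fun i n l => l ∈ Set.Ioc (0:ℝ) 2 ∧ ∀ t : ℝ, 0 ≤ t →
    |(μ {x | ENNReal.ofReal t < ENNReal.ofReal l * μ (A i n) *
        (hitTime (shift 𝒜) (A i n) x : ℝ≥0∞)}).toReal - Real.exp (-t)| ≤ 6 * eta n with hPdef
  refine ⟨fun i n => if h : ∃ l, P i n l then h.choose else 1, fun i n => ?_, ?_⟩
  · by_cases h : ∃ l, P i n l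
    · simp only [dif_pos h]
      exact h.choose_spec.1
    · simp only [dif_neg h]
      norm_num
  · have hgood : ∀ᶠ n in atTop, ∀ i, ∃ l, P i n l := by
      have hev1 : ∀ᶠ n in atTop, eps n < 1 / 64 :=
        hepsto.eventually (gt_mem_nhds (by norm_num))
      filter_upwards [hev1, eventually_ge_atTop 1] with n hn64 hn1 i
      have hη : eta n = Real.sqrt (eps n) := by
        refine min_eq_right ?_
        have : Real.sqrt (eps n) ≤ Real.sqrt (1 / 64) := Real.sqrt_le_sqrt hn64.le
        rwa [show (1:ℝ)/64 = (1/8)^2 by norm_num, Real.sqrt_sq (by norm_num)] at this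
      have hεη : eps n ≤ (eta n) ^ 2 := by
        rw [hη, Real.sq_sqrt (heps0 n).le]
      have hη8 : eta n ≤ 1 / 8 := min_le_left _ _
      -- per-i data
      have hA := hAmeas i n
      have hp0 : 0 < (μ (A i n)).toReal :=
        ENNReal.toReal_pos (hApos i n).ne' (measure_ne_top μ _)
      have hcompl : {x | hitTime (shift 𝒜) (A i n) x ≤ (n : ℕ∞)} = (ET (A i n) n)ᶜ := by
        ext x
        simp [ET, not_lt]
      have ha_r : 1 - fr μ (A i n) n ≤ r n := by
        have h1 : (μ (ET (A i n) n)ᶜ).toReal ≤ s n := by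
          rw [← hcompl]; exact hsbd n i
        rw [mreal_compl μ (ET_measurable hA n)] at h1
        exact le_trans h1 (hsr n)
      have hp_a : (μ (A i n)).toReal ≤ 1 - fr μ (A i n) n := by
        have h1 : fr μ (A i n) n ≤ fr μ (A i n) 1 := fr_antitone μ hn1
        have h2 : fr μ (A i n) 1 = 1 - (μ (A i n)).toReal := fr_one μ hT hA
        linarith
      have hpr : (μ (A i n)).toReal ≤ r n := le_trans hp_a ha_r
      have hpε : (μ (A i n)).toReal ≤ eps n := by
        have hg0 : (0:ℝ) ≤ (g n : ℝ) := Nat.cast_nonneg _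
        have := alphaMix_nonneg μ (g n)
        have h2 : r n ≤ (1 + (g n : ℝ)) * r n := by nlinarith [(hr0 n).le]
        simp only [hepsdef]
        linarith
      have herr : (1 - fr μ (A i n) ((n - 1) + 1 + g n)) + alphaMix μ (g n) ≤ eps n := by
        have hidx : (n - 1) + 1 + g n = n + g n := by omega
        rw [hidx]
        have h1 : fr μ (A i n) n - fr μ (A i n) (n + g n) ≤ 1 - fr μ (A i n) (g n) :=
          fr_sub_le μ hT hA n (g n)
        have h2 : 1 - fr μ (A i n) (g n) ≤ (g n : ℝ) * (μ (A i n)).toReal :=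
          one_sub_fr_le μ hT hA (g n)
        have h3 : (g n : ℝ) * (μ (A i n)).toReal ≤ (g n : ℝ) * r n :=
          mul_le_mul_of_nonneg_left hpr (Nat.cast_nonneg _)
        simp only [hepsdef]
        have h4 : 1 - fr μ (A i n) (n + g n) ≤ (1 + (g n : ℝ)) * r n := by nlinarith
        linarith
      obtain ⟨l, hl1, hl2⟩ := exists_good_lam μ hT hmix hA hp0 (heta0 n) hη8 hεη herr hpε
      exact ⟨l, hl1, hl2⟩
    have hup : ∀ᶠ n in atTop,
        (⨆ i, ⨆ t : {t : ℝ // 0 ≤ t},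
          |(μ {x | ENNReal.ofReal (t : ℝ) <
              ENNReal.ofReal (if h : ∃ l, P i n l then h.choose else 1) * μ (A i n) *
                (hitTime (shift 𝒜) (A i n) x : ℝ≥0∞)}).toReal -
            Real.exp (-(t : ℝ))|) ≤ 6 * eta n := by
      filter_upwards [hgood] with n hn
      have h6 : (0:ℝ) ≤ 6 * eta n := by linarith [heta0 n]
      refine Real.iSup_le (fun i => Real.iSup_le (fun t => ?_) h6) h6
      have h := hn i
      rw [dif_pos h]
      exact h.choose_spec.2 (t : ℝ) t.2
    have hlow : ∀ n : ℕ,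
        0 ≤ (⨆ i, ⨆ t : {t : ℝ // 0 ≤ t},
          |(μ {x | ENNReal.ofReal (t : ℝ) <
              ENNReal.ofReal (if h : ∃ l, P i n l then h.choose else 1) * μ (A i n) *
                (hitTime (shift 𝒜) (A i n) x : ℝ≥0∞)}).toReal -
            Real.exp (-(t : ℝ))|) :=
      fun n => Real.iSup_nonneg fun i => Real.iSup_nonneg fun t => abs_nonneg _
    have h6to : Tendsto (fun n => 6 * eta n) atTop (𝓝 0) := by
      have := hetato.const_mul (6:ℝ)
      rwa [mul_zero] at this
    exact squeeze_zero' (Eventually.of_forall hlow) hup h6to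
end
end

section
/- Let (Σ, T, μ) be a shift system with α-mixing coefficients α(·), n an integer, and A ∈ ℱ_0^{n-1}. Write H(k) = μ(τ_A > k). Then for every integer s > 2n and every integer j ≥ 1, |H(js) − H((j−1)s) · H(s − 2n)| ≤ μ(τ_A ≤ 2n) + α(n). -/
open MeasureTheory Filter Set
open scoped ENNReal Topology

noncomputable section

section AuxLemmas

variable {𝒜 : Type*} [m𝒜 : MeasurableSpace 𝒜]

lemma coordSigma_mono {a b a' b' : ℕ} (h : Set.Icc a b ⊆ Set.Icc a' b') :
    coordSigma 𝒜 a b ≤ coordSigma 𝒜 a' b' :=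
  iSup₂_le fun i hi => le_iSup₂ (f := fun i (_ : i ∈ Set.Icc a' b') => m𝒜.comap fun x : ℕ → 𝒜 => x i) i (h hi)

lemma coordSigma_le_pi (a b : ℕ) : coordSigma 𝒜 a b ≤ MeasurableSpace.pi :=
  iSup₂_le fun i _ => (measurable_pi_apply i).comap_le

lemma shift_iterate_apply (i : ℕ) (x : ℕ → 𝒜) (k : ℕ) : (shift 𝒜)^[i] x k = x (k + i) := by
  induction i generalizing x with
  | zero => rfl
  | succ i ih => rw [Function.iterate_succ_apply, ih]; rfl

lemma shift_iterate_measurable (i a b : ℕ) :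
    @Measurable _ _ (coordSigma 𝒜 (a + i) (b + i)) (coordSigma 𝒜 a b) ((shift 𝒜)^[i]) := by
  rw [measurable_iff_comap_le]
  unfold coordSigma
  rw [MeasurableSpace.comap_iSup]
  refine iSup_le fun k => ?_
  rw [MeasurableSpace.comap_iSup]
  refine iSup_le fun hk => ?_
  rw [MeasurableSpace.comap_comp]
  have heq : ((fun x : ℕ → 𝒜 => x k) ∘ (shift 𝒜)^[i]) = fun x => x (k + i) := by
    funext x; exact shift_iterate_apply i x k
  rw [heq]
  exact le_iSup₂ (f := fun j (_ : j ∈ Set.Icc (a + i) (b + i)) => m𝒜.comap fun x : ℕ → 𝒜 => x j)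
    (k + i) ⟨Nat.add_le_add_right hk.1 i, Nat.add_le_add_right hk.2 i⟩

/-- No entrance to `A` at times in `(a, b]`. -/
def noHit (𝒜 : Type*) (A : Set (ℕ → 𝒜)) (a b : ℕ) : Set (ℕ → 𝒜) :=
  {x | ∀ i, a < i → i ≤ b → (shift 𝒜)^[i] x ∉ A}

lemma noHit_eq_iInter (A : Set (ℕ → 𝒜)) (a b : ℕ) :
    noHit 𝒜 A a b = ⋂ i, ⋂ (_ : a < i ∧ i ≤ b), (shift 𝒜)^[i] ⁻¹' Aᶜ := by
  ext x; simp [noHit]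

lemma preimage_noHit (A : Set (ℕ → 𝒜)) (a b c : ℕ) :
    (shift 𝒜)^[c] ⁻¹' noHit 𝒜 A a b = noHit 𝒜 A (a + c) (b + c) := by
  ext x
  simp only [noHit, Set.mem_preimage, Set.mem_setOf_eq]
  constructor
  · intro h i hi1 hi2
    have h2 := h (i - c) (by omega) (by omega)
    rwa [← Function.iterate_add_apply, Nat.sub_add_cancel (by omega)] at h2
  · intro h i hi1 hi2
    have h2 := h (i + c) (by omega) (by omega)
    rwa [Function.iterate_add_apply] at h2

lemma noHit_mem (A : Set (ℕ → 𝒜)) {p : ℕ} (hA : MeasurableSet[coordSigma 𝒜 0 p] A) (a b : ℕ) :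
    MeasurableSet[coordSigma 𝒜 (a + 1) (b + p)] (noHit 𝒜 A a b) := by
  rw [noHit_eq_iInter]
  refine MeasurableSet.iInter fun i => MeasurableSet.iInter fun hi => ?_
  have h1 : MeasurableSet[coordSigma 𝒜 (0 + i) (p + i)] ((shift 𝒜)^[i] ⁻¹' Aᶜ) :=
    shift_iterate_measurable i 0 p hA.compl
  exact coordSigma_mono (Set.Icc_subset_Icc (by omega) (by omega)) _ h1

lemma noHit_measurableSet (A : Set (ℕ → 𝒜)) {p : ℕ}
    (hA : MeasurableSet[coordSigma 𝒜 0 p] A) (a b : ℕ) :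
    MeasurableSet (noHit 𝒜 A a b) :=
  coordSigma_le_pi (a + 1) (b + p) _ (noHit_mem A hA a b)

lemma lt_hitTime_iff {X : Type*} (T : X → X) (A : Set X) (x : X) (k : ℕ) :
    (k : ℕ∞) < hitTime T A x ↔ ∀ i, 1 ≤ i → i ≤ k → T^[i] x ∉ A := by
  constructor
  · intro h i h1 hik hmem
    have hle : hitTime T A x ≤ (i : ℕ∞) :=
      iInf₂_le (f := fun (i : ℕ) (_ : i ∈ {k : ℕ | 1 ≤ k ∧ T^[k] x ∈ A}) => (i : ℕ∞)) i ⟨h1, hmem⟩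
    exact absurd (h.trans_le hle) (by exact_mod_cast not_lt.2 hik)
  · intro h
    have hle : ((k + 1 : ℕ) : ℕ∞) ≤ hitTime T A x := by
      refine le_iInf₂ fun i hi => ?_
      have : k < i := by
        by_contra hc
        exact h i hi.1 (by omega) hi.2
      exact_mod_cast this
    exact lt_of_lt_of_le (by exact_mod_cast Nat.lt_succ_self k) hle

lemma setOf_lt_hitTime_eq (A : Set (ℕ → 𝒜)) (k : ℕ) :
    {x | (k : ℕ∞) < hitTime (shift 𝒜) A x} = noHit 𝒜 A 0 k := by
  ext x
  rw [Set.mem_setOf_eq, lt_hitTime_iff]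
  exact ⟨fun h i h1 h2 => h i h1 h2, fun h i h1 h2 => h i h1 h2⟩

lemma setOf_hitTime_le_eq (A : Set (ℕ → 𝒜)) (k : ℕ) :
    {x | hitTime (shift 𝒜) A x ≤ (k : ℕ∞)} = (noHit 𝒜 A 0 k)ᶜ := by
  rw [← setOf_lt_hitTime_eq]
  ext x
  simp [not_lt]

lemma le_alphaMix {𝒜 : Type*} [MeasurableSpace 𝒜] (μ : Measure (ℕ → 𝒜))
    [IsProbabilityMeasure μ] (g M N : ℕ) (S T : Set (ℕ → 𝒜))
    (hS : MeasurableSet[coordSigma 𝒜 0 N] S)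
    (hT : MeasurableSet[coordSigma 𝒜 (N + g) (M + g)] T) :
    |(μ (S ∩ T)).toReal - (μ S).toReal * (μ T).toReal| ≤ alphaMix μ g := by
  have tone : ∀ X : Set (ℕ → 𝒜), (μ X).toReal ≤ 1 := by
    intro X
    have := ENNReal.toReal_mono (by simp) (prob_le_one (μ := μ) (s := X))
    simpa using this
  have bound : ∀ X Y : Set (ℕ → 𝒜),
      |(μ (X ∩ Y)).toReal - (μ X).toReal * (μ Y).toReal| ≤ 1 := by
    intro X Y
    have h1 := tone (X ∩ Y); have h2 := tone X; have h3 := tone Y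
    have n1 : (0:ℝ) ≤ (μ (X ∩ Y)).toReal := ENNReal.toReal_nonneg
    have n2 : (0:ℝ) ≤ (μ X).toReal := ENNReal.toReal_nonneg
    have n3 : (0:ℝ) ≤ (μ Y).toReal := ENNReal.toReal_nonneg
    rw [abs_le]
    constructor <;> nlinarith
  have step1 : |(μ (S ∩ T)).toReal - (μ S).toReal * (μ T).toReal| ≤
      ⨆ B : {B : Set (ℕ → 𝒜) // MeasurableSet[coordSigma 𝒜 (N + g) (M + g)] B},
        |(μ (S ∩ B)).toReal - (μ S).toReal * (μ B).toReal| :=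
    le_ciSup (f := fun B : {B : Set (ℕ → 𝒜) // MeasurableSet[coordSigma 𝒜 (N + g) (M + g)] B} =>
        |(μ (S ∩ B)).toReal - (μ S).toReal * (μ B).toReal|)
      ⟨1, by rintro _ ⟨B, rfl⟩; exact bound _ _⟩ ⟨T, hT⟩
  have step2 : (⨆ B : {B : Set (ℕ → 𝒜) // MeasurableSet[coordSigma 𝒜 (N + g) (M + g)] B},
        |(μ (S ∩ B)).toReal - (μ S).toReal * (μ B).toReal|) ≤
      ⨆ A : {A : Set (ℕ → 𝒜) // MeasurableSet[coordSigma 𝒜 0 N] A},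
        ⨆ B : {B : Set (ℕ → 𝒜) // MeasurableSet[coordSigma 𝒜 (N + g) (M + g)] B},
          |(μ ((A : Set (ℕ → 𝒜)) ∩ B)).toReal - (μ A).toReal * (μ B).toReal| :=
    le_ciSup (f := fun A : {A : Set (ℕ → 𝒜) // MeasurableSet[coordSigma 𝒜 0 N] A} =>
        ⨆ B : {B : Set (ℕ → 𝒜) // MeasurableSet[coordSigma 𝒜 (N + g) (M + g)] B},
          |(μ ((A : Set (ℕ → 𝒜)) ∩ B)).toReal - (μ A).toReal * (μ B).toReal|)
      ⟨1, by rintro _ ⟨A, rfl⟩; exact Real.iSup_le (fun B => bound _ _) zero_le_one⟩ ⟨S, hS⟩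
  have step3 : (⨆ A : {A : Set (ℕ → 𝒜) // MeasurableSet[coordSigma 𝒜 0 N] A},
        ⨆ B : {B : Set (ℕ → 𝒜) // MeasurableSet[coordSigma 𝒜 (N + g) (M + g)] B},
          |(μ ((A : Set (ℕ → 𝒜)) ∩ B)).toReal - (μ A).toReal * (μ B).toReal|) ≤
      ⨆ n : ℕ, ⨆ A : {A : Set (ℕ → 𝒜) // MeasurableSet[coordSigma 𝒜 0 n] A},
        ⨆ B : {B : Set (ℕ → 𝒜) // MeasurableSet[coordSigma 𝒜 (n + g) (M + g)] B},
          |(μ ((A : Set (ℕ → 𝒜)) ∩ B)).toReal - (μ A).toReal * (μ B).toReal| :=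
    le_ciSup (f := fun n : ℕ =>
        ⨆ A : {A : Set (ℕ → 𝒜) // MeasurableSet[coordSigma 𝒜 0 n] A},
          ⨆ B : {B : Set (ℕ → 𝒜) // MeasurableSet[coordSigma 𝒜 (n + g) (M + g)] B},
            |(μ ((A : Set (ℕ → 𝒜)) ∩ B)).toReal - (μ A).toReal * (μ B).toReal|)
      ⟨1, by
        rintro _ ⟨n, rfl⟩
        exact Real.iSup_le (fun A => Real.iSup_le (fun B => bound _ _) zero_le_one) zero_le_one⟩
      N
  have step4 : (⨆ n : ℕ, ⨆ A : {A : Set (ℕ → 𝒜) // MeasurableSet[coordSigma 𝒜 0 n] A},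
        ⨆ B : {B : Set (ℕ → 𝒜) // MeasurableSet[coordSigma 𝒜 (n + g) (M + g)] B},
          |(μ ((A : Set (ℕ → 𝒜)) ∩ B)).toReal - (μ A).toReal * (μ B).toReal|) ≤
      alphaMix μ g :=
    le_ciSup (f := fun m : ℕ =>
        ⨆ n : ℕ, ⨆ A : {A : Set (ℕ → 𝒜) // MeasurableSet[coordSigma 𝒜 0 n] A},
          ⨆ B : {B : Set (ℕ → 𝒜) // MeasurableSet[coordSigma 𝒜 (n + g) (m + g)] B},
            |(μ ((A : Set (ℕ → 𝒜)) ∩ B)).toReal - (μ A).toReal * (μ B).toReal|)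
      ⟨1, by
        rintro _ ⟨m, rfl⟩
        exact Real.iSup_le (fun n => Real.iSup_le
          (fun A => Real.iSup_le (fun B => bound _ _) zero_le_one) zero_le_one) zero_le_one⟩
      M
  exact step1.trans (step2.trans (step3.trans step4))

end AuxLemmas

/-- **Almost-multiplicativity of the tail `H(k) = μ(τ_A > k)` along multiples of `s`.**
For a shift system with α-mixing coefficients `α(·)`, `A ∈ ℱ_0^{n-1}`, every `s > 2n` and
every `j ≥ 1`, `|H(js) − H((j−1)s)·H(s−2n)| ≤ μ(τ_A ≤ 2n) + α(n)`. -/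
theorem tail_almost_multiplicative
    {𝒜 : Type*} [Countable 𝒜] [MeasurableSpace 𝒜] [DiscreteMeasurableSpace 𝒜]
    (μ : Measure (ℕ → 𝒜)) [IsProbabilityMeasure μ]
    (hT : MeasurePreserving (shift 𝒜) μ μ)
    (n : ℕ) (A : Set (ℕ → 𝒜))
    (hAmeas : MeasurableSet[coordSigma 𝒜 0 (n - 1)] A)
    (s : ℕ) (hs : 2 * n < s) (j : ℕ) (hj : 1 ≤ j) :
    |(μ {x | ((j * s : ℕ) : ℕ∞) < hitTime (shift 𝒜) A x}).toReal -
        (μ {x | (((j - 1) * s : ℕ) : ℕ∞) < hitTime (shift 𝒜) A x}).toReal *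
          (μ {x | ((s - 2 * n : ℕ) : ℕ∞) < hitTime (shift 𝒜) A x}).toReal| ≤
      (μ {x | hitTime (shift 𝒜) A x ≤ ((2 * n : ℕ) : ℕ∞)}).toReal + alphaMix μ n := by
  obtain ⟨q, rfl⟩ : ∃ q, j = q + 1 := ⟨j - 1, by omega⟩
  have hq1 : q + 1 - 1 = q := by omega
  set a := q * s with ha
  have hmul : (q + 1) * s = a + s := by rw [ha, Nat.succ_mul]
  rw [hq1, hmul, setOf_lt_hitTime_eq, setOf_lt_hitTime_eq, setOf_lt_hitTime_eq,
    setOf_hitTime_le_eq]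
  set B1 := noHit 𝒜 A 0 a with hB1def
  set B2 := noHit 𝒜 A (a + 2 * n) (a + s) with hB2def
  set Emid := noHit 𝒜 A a (a + 2 * n) with hEmiddef
  set Full := noHit 𝒜 A 0 (a + s) with hFulldef
  -- splitting
  have hsplit : Full = (B1 ∩ Emid) ∩ B2 := by
    ext x
    simp only [hB1def, hB2def, hEmiddef, hFulldef, noHit, Set.mem_inter_iff, Set.mem_setOf_eq]
    constructor
    · intro h
      exact ⟨⟨fun i h1 h2 => h i h1 (by omega), fun i h1 h2 => h i (by omega) (by omega)⟩,
        fun i h1 h2 => h i (by omega) h2⟩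
    · rintro ⟨⟨h1, h2⟩, h3⟩ i hi1 hi2
      by_cases c1 : i ≤ a
      · exact h1 i hi1 c1
      by_cases c2 : i ≤ a + 2 * n
      · exact h2 i (by omega) c2
      · exact h3 i (by omega) hi2
  have hsub1 : Full ⊆ B1 ∩ B2 := by
    rw [hsplit]; intro x hx; exact ⟨hx.1.1, hx.2⟩
  have hsub2 : B1 ∩ B2 ⊆ Full ∪ Emidᶜ := by
    intro x hx
    by_cases hE : x ∈ Emid
    · left; rw [hsplit]; exact ⟨⟨hx.1, hE⟩, hx.2⟩
    · right; exact hE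
  -- measures via preimages
  have hμB2 : μ B2 = μ (noHit 𝒜 A 0 (s - 2 * n)) := by
    have hpre : (shift 𝒜)^[a + 2 * n] ⁻¹' noHit 𝒜 A 0 (s - 2 * n) = B2 := by
      rw [preimage_noHit]
      rw [hB2def, show 0 + (a + 2 * n) = a + 2 * n by omega,
        show (s - 2 * n) + (a + 2 * n) = a + s by omega]
    rw [← hpre]
    exact (hT.iterate (a + 2 * n)).measure_preimage
      (noHit_measurableSet A hAmeas 0 (s - 2 * n)).nullMeasurableSet
  have hμEmid : μ Emidᶜ = μ (noHit 𝒜 A 0 (2 * n))ᶜ := by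
    have hpre : (shift 𝒜)^[a] ⁻¹' (noHit 𝒜 A 0 (2 * n))ᶜ = Emidᶜ := by
      rw [Set.preimage_compl, preimage_noHit, hEmiddef,
        show 0 + a = a by omega, show 2 * n + a = a + 2 * n by omega]
    rw [← hpre]
    exact (hT.iterate a).measure_preimage
      (noHit_measurableSet A hAmeas 0 (2 * n)).compl.nullMeasurableSet
  -- alpha-mixing bound
  have hB1mem : MeasurableSet[coordSigma 𝒜 0 (a + (n - 1))] B1 := by
    have := noHit_mem A hAmeas 0 a
    exact coordSigma_mono (Set.Icc_subset_Icc (by omega) (by omega)) _ this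
  have hB2mem : MeasurableSet[coordSigma 𝒜 ((a + (n - 1)) + n) ((a + s) + n)] B2 := by
    have := noHit_mem A hAmeas (a + 2 * n) (a + s)
    exact coordSigma_mono (Set.Icc_subset_Icc (by omega) (by omega)) _ this
  have halpha : |(μ (B1 ∩ B2)).toReal - (μ B1).toReal * (μ B2).toReal| ≤ alphaMix μ n :=
    le_alphaMix μ n (a + s) (a + (n - 1)) B1 B2 hB1mem hB2mem
  -- real estimates
  have hfin : ∀ X : Set (ℕ → 𝒜), μ X ≠ ⊤ := fun X => measure_ne_top μ X
  have h1 : (μ Full).toReal ≤ (μ (B1 ∩ B2)).toReal :=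
    ENNReal.toReal_mono (hfin _) (measure_mono hsub1)
  have h2 : (μ (B1 ∩ B2)).toReal ≤ (μ Full).toReal + (μ Emidᶜ).toReal := by
    have hle : μ (B1 ∩ B2) ≤ μ Full + μ Emidᶜ :=
      (measure_mono hsub2).trans (measure_union_le Full Emidᶜ)
    have h' := ENNReal.toReal_mono (ENNReal.add_ne_top.2 ⟨hfin _, hfin _⟩) hle
    rwa [ENNReal.toReal_add (hfin _) (hfin _)] at h'
  rw [hμEmid] at h2
  rw [hμB2] at halpha
  have habs : |(μ Full).toReal - (μ (B1 ∩ B2)).toReal| ≤ (μ (noHit 𝒜 A 0 (2 * n))ᶜ).toReal := by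
    rw [abs_le]; constructor <;> linarith
  calc |(μ Full).toReal - (μ B1).toReal * (μ (noHit 𝒜 A 0 (s - 2 * n))).toReal|
      ≤ |(μ Full).toReal - (μ (B1 ∩ B2)).toReal| +
        |(μ (B1 ∩ B2)).toReal - (μ B1).toReal * (μ (noHit 𝒜 A 0 (s - 2 * n))).toReal| :=
        abs_sub_le _ _ _
    _ ≤ (μ (noHit 𝒜 A 0 (2 * n))ᶜ).toReal + alphaMix μ n := add_le_add habs halpha
end
end

section
/- Let (X, T, μ) be an ergodic measure-preserving probability system, A a measurable set with μ(A) > 0, and λ(A) > 0 any constant. Define F_A(t) = μ({x : λ(A)μ(A)τ_A(x) ≤ t}) and G_A(s) = λ(A)^{−1} μ({x : λ(A)μ(A)τ_A(x) > s} | A). Then for all 0 < t < t': ∫_t^{t'} G_A(s) ds − μ(A) ≤ F_A(t') − F_A(t) ≤ ∫_t^{t'} G_A(s) ds + μ(A). -/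
open MeasureTheory Filter Set
open scoped ENNReal Topology

noncomputable section

/-- `F_A(t) = μ(λ(A)μ(A)τ_A ≤ t)`, the distribution function of the rescaled hitting time. -/
def FA {X : Type*} [MeasurableSpace X] (μ : Measure X) (T : X → X) (lam : ℝ)
    (A : Set X) (t : ℝ) : ℝ :=
  (μ {x | ENNReal.ofReal lam * μ A * (hitTime T A x : ℝ≥0∞) ≤ ENNReal.ofReal t}).toReal

/-- `G_A(s) = λ(A)⁻¹ μ(λ(A)μ(A)τ_A > s | A)`, the normalized (non-increasing) distribution
function of the rescaled return time. -/
def GA {X : Type*} [MeasurableSpace X] (μ : Measure X) (T : X → X) (lam : ℝ)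
    (A : Set X) (s : ℝ) : ℝ :=
  lam⁻¹ * (ProbabilityTheory.cond μ A
    {x | ENNReal.ofReal s < ENNReal.ofReal lam * μ A * (hitTime T A x : ℝ≥0∞)}).toReal

namespace HitAux

variable {X : Type*} (T : X → X) (A : Set X)

lemma hitTime_le_iff (x : X) (n : ℕ) :
    hitTime T A x ≤ (n : ℕ∞) ↔ ∃ k, 1 ≤ k ∧ k ≤ n ∧ T^[k] x ∈ A := by
  constructor
  · intro h
    by_contra hc
    push_neg at hc
    have h2 : ((n + 1 : ℕ) : ℕ∞) ≤ hitTime T A x := by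
      refine le_iInf₂ fun k hk => ?_
      rcases hk with ⟨hk1, hkA⟩
      have hnk : n + 1 ≤ k := by
        by_contra h'
        push_neg at h'
        exact hc k hk1 (Nat.lt_succ_iff.mp h') hkA
      exact_mod_cast hnk
    have h3 := h2.trans h
    have : n + 1 ≤ n := by exact_mod_cast h3
    omega
  · rintro ⟨k, h1, hkn, hA⟩
    exact le_trans (iInf₂_le k ⟨h1, hA⟩) (by exact_mod_cast hkn)

lemma lt_hitTime_iff (x : X) (n : ℕ) :
    (n : ℕ∞) < hitTime T A x ↔ ∀ k, 1 ≤ k → k ≤ n → T^[k] x ∉ A := by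
  rw [← not_le, hitTime_le_iff]
  push_neg
  rfl

lemma succ_le_hitTime_iff (x : X) (n : ℕ) :
    ((n + 1 : ℕ) : ℕ∞) ≤ hitTime T A x ↔ ∀ k, 1 ≤ k → k ≤ n → T^[k] x ∉ A := by
  rw [show ((n + 1 : ℕ) : ℕ∞) = (n : ℕ∞) + 1 by push_cast; rfl,
    ENat.add_one_le_iff (ENat.coe_ne_top n), lt_hitTime_iff]

lemma hitTime_eq_succ_iff (x : X) (n : ℕ) :
    hitTime T A x = ((n + 1 : ℕ) : ℕ∞) ↔
      hitTime T A x ≤ ((n + 1 : ℕ) : ℕ∞) ∧ ¬ hitTime T A x ≤ (n : ℕ∞) := by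
  constructor
  · intro h; rw [h]; constructor
    · exact le_rfl
    · intro hc; have : (n : ℕ) + 1 ≤ n := by exact_mod_cast hc
      omega
  · rintro ⟨h1, h2⟩
    refine le_antisymm h1 ?_
    rw [not_le] at h2
    rw [show ((n + 1 : ℕ) : ℕ∞) = (n : ℕ∞) + 1 by push_cast; rfl,
      ENat.add_one_le_iff (ENat.coe_ne_top n)]
    exact h2

section Meas

variable [MeasurableSpace X]

lemma measurableSet_le (hT : Measurable T) (hA : MeasurableSet A) (n : ℕ) :
    MeasurableSet {x | hitTime T A x ≤ (n : ℕ∞)} := by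
  have h : {x | hitTime T A x ≤ (n : ℕ∞)} = ⋃ k ∈ Finset.Icc 1 n, T^[k] ⁻¹' A := by
    ext x
    simp only [mem_setOf_eq, hitTime_le_iff, mem_iUnion, Finset.mem_Icc, mem_preimage,
      exists_prop]
    tauto
  rw [h]
  exact MeasurableSet.biUnion (Finset.Icc 1 n).countable_toSet
    fun k _ => (hT.iterate k) hA

lemma measurableSet_succ_le (hT : Measurable T) (hA : MeasurableSet A) (n : ℕ) :
    MeasurableSet {x | ((n + 1 : ℕ) : ℕ∞) ≤ hitTime T A x} := by
  have h : {x | ((n + 1 : ℕ) : ℕ∞) ≤ hitTime T A x} = {x | hitTime T A x ≤ (n : ℕ∞)}ᶜ := by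
    ext x
    rw [mem_compl_iff, mem_setOf_eq, mem_setOf_eq, not_le,
      show ((n + 1 : ℕ) : ℕ∞) = (n : ℕ∞) + 1 by push_cast; rfl,
      ENat.add_one_le_iff (ENat.coe_ne_top n)]
  rw [h]
  exact (measurableSet_le T A hT hA n).compl

/-- The key identity `μ(τ_A = n) = μ(A ∩ {τ_A ≥ n})`, valid for measure-preserving maps. -/
lemma kac {μ : Measure X} [IsProbabilityMeasure μ]
    (hpres : MeasurePreserving T μ μ) (hA : MeasurableSet A) (n : ℕ) :
    μ {x | hitTime T A x = ((n + 1 : ℕ) : ℕ∞)} =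
      μ (A ∩ {x | ((n + 1 : ℕ) : ℕ∞) ≤ hitTime T A x}) := by
  have hT := hpres.measurable
  set H : ℕ → Set X := fun m => {x | ((m : ℕ) : ℕ∞) ≤ hitTime T A x} with hH
  have hmemH : ∀ (m : ℕ) (x : X), x ∈ H (m + 1) ↔ ∀ k, 1 ≤ k → k ≤ m → T^[k] x ∉ A := by
    intro m x
    exact succ_le_hitTime_iff T A x m
  have hsplit : T ⁻¹' (H (n + 1)) = (T ⁻¹' (A ∩ H (n + 1))) ∪ H (n + 2) := by
    ext x
    simp only [mem_preimage, mem_union, mem_inter_iff, hmemH]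
    constructor
    · intro h
      by_cases hTx : T x ∈ A
      · left
        refine ⟨hTx, fun k hk1 hkn => ?_⟩
        have := h k hk1 hkn
        rwa [← Function.iterate_succ_apply] at this
      · right
        intro k hk1 hkn
        rcases Nat.eq_or_lt_of_le hk1 with h1 | h2
        · rw [← h1]; simpa using hTx
        · obtain ⟨j, rfl⟩ : ∃ j, k = j + 1 := ⟨k - 1, by omega⟩
          rw [Function.iterate_succ_apply]
          exact h j (by omega) (by omega)
    · rintro (⟨hTx, h⟩ | h) k hk1 hkn
      · exact h k hk1 hkn
      · rw [← Function.iterate_succ_apply]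
        exact h (k + 1) (by omega) (by omega)
  have hdisj : Disjoint (T ⁻¹' (A ∩ H (n + 1))) (H (n + 2)) := by
    rw [Set.disjoint_left]
    rintro x ⟨hTx, -⟩ hx
    have := (hmemH (n + 1) x).1 hx 1 le_rfl (by omega)
    simp only [Function.iterate_one] at this
    exact this hTx
  have hmeasH : ∀ m : ℕ, MeasurableSet (H (m + 1)) := fun m =>
    measurableSet_succ_le T A hT hA m
  have e1 : μ (H (n + 1)) = μ (A ∩ H (n + 1)) + μ (H (n + 2)) := by
    calc μ (H (n + 1)) = μ (T ⁻¹' (H (n + 1))) :=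
          (hpres.measure_preimage (hmeasH n).nullMeasurableSet).symm
    _ = μ (T ⁻¹' (A ∩ H (n + 1))) + μ (H (n + 2)) := by
        rw [hsplit, measure_union hdisj (hmeasH (n + 1))]
    _ = μ (A ∩ H (n + 1)) + μ (H (n + 2)) := by
        rw [hpres.measure_preimage ((hA.inter (hmeasH n)).nullMeasurableSet)]
  have hsplit2 : H (n + 1) = {x | hitTime T A x = ((n + 1 : ℕ) : ℕ∞)} ∪ H (n + 2) := by
    ext x
    simp only [hH, mem_setOf_eq, mem_union]
    constructor
    · intro h
      rcases eq_or_lt_of_le h with heq | hlt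
      · exact Or.inl heq.symm
      · right
        have h2 : ((n + 1 : ℕ) : ℕ∞) + 1 ≤ hitTime T A x :=
          (ENat.add_one_le_iff (ENat.coe_ne_top (n + 1))).2 hlt
        refine le_trans (le_of_eq ?_) h2
        push_cast; ring
    · rintro (h | h)
      · exact le_of_eq h.symm
      · refine le_trans ?_ h
        exact_mod_cast Nat.le_succ (n + 1)
  have hdisj2 : Disjoint {x | hitTime T A x = ((n + 1 : ℕ) : ℕ∞)} (H (n + 2)) := by
    rw [Set.disjoint_left]
    intro x hx h2
    simp only [mem_setOf_eq] at hx
    simp only [hH, mem_setOf_eq, hx] at h2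
    have : (n + 2 : ℕ) ≤ n + 1 := by exact_mod_cast h2
    omega
  have e2 : μ (H (n + 1)) = μ {x | hitTime T A x = ((n + 1 : ℕ) : ℕ∞)} + μ (H (n + 2)) := by
    rw [hsplit2, measure_union hdisj2 (hmeasH (n + 1))]
  have hfin : μ (H (n + 2)) ≠ ⊤ := measure_ne_top μ _
  rw [e2] at e1
  exact ((ENNReal.add_left_inj hfin).1 e1.symm).symm

end Meas

lemma key_le_iff {cr u : ℝ} (hcr : 0 < cr) (hu : 0 ≤ u) (a : ℕ∞) :
    ENNReal.ofReal cr * (a : ℝ≥0∞) ≤ ENNReal.ofReal u ↔ a ≤ ((⌊u / cr⌋₊ : ℕ) : ℕ∞) := by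
  induction a using ENat.recTopCoe with
  | top =>
    simp only [ENat.toENNReal_top]
    rw [ENNReal.mul_top (by simp [ENNReal.ofReal_eq_zero, not_le, hcr])]
    simp [ENNReal.ofReal_ne_top, top_le_iff]
  | coe n =>
    rw [ENat.toENNReal_coe]
    rw [show ((n : ℕ) : ℝ≥0∞) = ENNReal.ofReal (n : ℝ) by simp,
      ← ENNReal.ofReal_mul hcr.le, ENNReal.ofReal_le_ofReal_iff hu]
    rw [Nat.cast_le (α := ℕ∞), Nat.le_floor_iff (div_nonneg hu hcr.le)]
    rw [le_div_iff₀ hcr]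
    constructor
    · intro h; linarith [h]
    · intro h; linarith [h]

lemma key_lt_iff {cr u : ℝ} (hcr : 0 < cr) (hu : 0 ≤ u) (a : ℕ∞) :
    ENNReal.ofReal u < ENNReal.ofReal cr * (a : ℝ≥0∞) ↔
      ((⌊u / cr⌋₊ + 1 : ℕ) : ℕ∞) ≤ a := by
  rw [← not_le, key_le_iff hcr hu, not_le,
    show ((⌊u / cr⌋₊ + 1 : ℕ) : ℕ∞) = ((⌊u / cr⌋₊ : ℕ) : ℕ∞) + 1 by push_cast; rfl,
    ENat.add_one_le_iff (ENat.coe_ne_top _)]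

end HitAux

/-- **Increments of the hitting-time distribution versus the integral of the return-time
function.** -/
theorem FA_increment_integral_GA
    {X : Type*} [MeasurableSpace X] (μ : Measure X) [IsProbabilityMeasure μ]
    (T : X → X) (hErg : Ergodic T μ)
    (A : Set X) (hAmeas : MeasurableSet A) (hApos : 0 < μ A)
    (lam : ℝ) (hlam : 0 < lam)
    (t t' : ℝ) (ht : 0 < t) (htt' : t < t') :
    (∫ s in t..t', GA μ T lam A s) - (μ A).toReal ≤ FA μ T lam A t' - FA μ T lam A t ∧
    FA μ T lam A t' - FA μ T lam A t ≤ (∫ s in t..t', GA μ T lam A s) + (μ A).toReal := by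
  have hpres : MeasurePreserving T μ μ := hErg.toMeasurePreserving
  have hT : Measurable T := hpres.measurable
  have hμfin : μ A ≠ ⊤ := measure_ne_top μ A
  set cr : ℝ := lam * (μ A).toReal with hcrdef
  have hApos' : 0 < (μ A).toReal := ENNReal.toReal_pos hApos.ne' hμfin
  have hcr : 0 < cr := mul_pos hlam hApos'
  have hc : ENNReal.ofReal lam * μ A = ENNReal.ofReal cr := by
    rw [hcrdef, ENNReal.ofReal_mul hlam.le, ENNReal.ofReal_toReal hμfin]
  set ψ : ℝ → ℝ := fun u =>
    (μ {x | ENNReal.ofReal lam * μ A * (hitTime T A x : ℝ≥0∞) ≤ ENNReal.ofReal u}).toReal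
    with hψdef
  have hFA : ∀ u : ℝ, FA μ T lam A u = ψ u := fun u => rfl
  have hset : ∀ u : ℝ, 0 ≤ u →
      {x | ENNReal.ofReal lam * μ A * (hitTime T A x : ℝ≥0∞) ≤ ENNReal.ofReal u}
        = {x | hitTime T A x ≤ ((⌊u / cr⌋₊ : ℕ) : ℕ∞)} := by
    intro u hu; ext x
    rw [mem_setOf_eq, mem_setOf_eq, hc, HitAux.key_le_iff hcr hu]
  have hsetlt : ∀ u : ℝ, 0 ≤ u →
      {x | ENNReal.ofReal u < ENNReal.ofReal lam * μ A * (hitTime T A x : ℝ≥0∞)}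
        = {x | ((⌊u / cr⌋₊ + 1 : ℕ) : ℕ∞) ≤ hitTime T A x} := by
    intro u hu; ext x
    rw [mem_setOf_eq, mem_setOf_eq, hc, HitAux.key_lt_iff hcr hu]
  have hψmono : Monotone ψ := by
    intro u v huv
    exact ENNReal.toReal_mono (measure_ne_top μ _)
      (measure_mono fun x hx => le_trans hx (ENNReal.ofReal_le_ofReal huv))
  -- the increments of ψ over length-cr intervals
  have hψdiff : ∀ u : ℝ, 0 ≤ u →
      ψ (u + cr) - ψ u
        = (μ (A ∩ {x | ((⌊u / cr⌋₊ + 1 : ℕ) : ℕ∞) ≤ hitTime T A x})).toReal := by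
    intro u hu
    have hfl : ⌊(u + cr) / cr⌋₊ = ⌊u / cr⌋₊ + 1 := by
      rw [add_div, div_self hcr.ne', Nat.floor_add_one (div_nonneg hu hcr.le)]
    have h1 : ψ (u + cr) = (μ {x | hitTime T A x ≤ ((⌊u / cr⌋₊ + 1 : ℕ) : ℕ∞)}).toReal := by
      rw [hψdef]
      simp only
      rw [hset (u + cr) (by positivity), hfl]
    have h2 : ψ u = (μ {x | hitTime T A x ≤ ((⌊u / cr⌋₊ : ℕ) : ℕ∞)}).toReal := by
      rw [hψdef]
      simp only
      rw [hset u hu]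
    set m := ⌊u / cr⌋₊ with hm
    have hsplit : {x | hitTime T A x ≤ ((m + 1 : ℕ) : ℕ∞)}
        = {x | hitTime T A x = ((m + 1 : ℕ) : ℕ∞)} ∪ {x | hitTime T A x ≤ ((m : ℕ) : ℕ∞)} := by
      ext x
      simp only [mem_setOf_eq, mem_union]
      constructor
      · intro h
        by_cases hle : hitTime T A x ≤ ((m : ℕ) : ℕ∞)
        · exact Or.inr hle
        · exact Or.inl ((HitAux.hitTime_eq_succ_iff T A x m).2 ⟨h, hle⟩)
      · rintro (h | h)
        · exact le_of_eq h
        · exact le_trans h (by exact_mod_cast Nat.le_succ m)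
    have hdisj : Disjoint {x | hitTime T A x = ((m + 1 : ℕ) : ℕ∞)}
        {x | hitTime T A x ≤ ((m : ℕ) : ℕ∞)} := by
      rw [Set.disjoint_left]
      intro x hx h2x
      simp only [mem_setOf_eq] at hx h2x
      exact ((HitAux.hitTime_eq_succ_iff T A x m).1 hx).2 h2x
    have hmeasle : MeasurableSet {x | hitTime T A x ≤ ((m : ℕ) : ℕ∞)} :=
      HitAux.measurableSet_le T A hT hAmeas m
    have e : μ {x | hitTime T A x ≤ ((m + 1 : ℕ) : ℕ∞)}
        = μ {x | hitTime T A x = ((m + 1 : ℕ) : ℕ∞)}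
          + μ {x | hitTime T A x ≤ ((m : ℕ) : ℕ∞)} := by
      rw [hsplit, measure_union hdisj hmeasle]
    rw [h1, h2, e, ENNReal.toReal_add (measure_ne_top μ _) (measure_ne_top μ _),
      HitAux.kac T A hpres hAmeas m]
    ring
  have hbound : ∀ u : ℝ, 0 ≤ u → ψ (u + cr) - ψ u ≤ (μ A).toReal := by
    intro u hu
    rw [hψdiff u hu]
    exact ENNReal.toReal_mono hμfin (measure_mono inter_subset_left)
  -- identification of GA
  have hGA : ∀ u : ℝ, 0 ≤ u → GA μ T lam A u = cr⁻¹ * (ψ (u + cr) - ψ u) := by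
    intro u hu
    rw [hψdiff u hu]
    rw [GA, hsetlt u hu, ProbabilityTheory.cond_apply hAmeas,
      ← HitAux.kac T A hpres hAmeas, HitAux.kac T A hpres hAmeas,
      ENNReal.toReal_mul, ENNReal.toReal_inv]
    rw [hcrdef, mul_inv]
    ring
  -- integrability
  have hψint : ∀ a b : ℝ, IntervalIntegrable ψ volume a b := fun a b =>
    hψmono.intervalIntegrable
  have hψint' : ∀ a b : ℝ, IntervalIntegrable (fun s => ψ (s + cr)) volume a b := fun a b =>
    (hψmono.comp fun x y hxy => (add_le_add_iff_right cr).2 hxy).intervalIntegrable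
  -- value of the integral
  have hint : (∫ s in t..t', GA μ T lam A s)
      = cr⁻¹ * ((∫ s in t..t', ψ (s + cr)) - ∫ s in t..t', ψ s) := by
    rw [show (∫ s in t..t', GA μ T lam A s)
        = ∫ s in t..t', cr⁻¹ * (ψ (s + cr) - ψ s) from
      intervalIntegral.integral_congr fun s hs => by
        rw [uIcc_of_le htt'.le] at hs
        exact hGA s (le_trans ht.le hs.1)]
    rw [intervalIntegral.integral_const_mul,
      intervalIntegral.integral_sub (hψint' t t') (hψint t t')]
  have hshift : (∫ s in t..t', ψ (s + cr)) = ∫ s in (t + cr)..(t' + cr), ψ s :=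
    intervalIntegral.integral_comp_add_right ψ cr
  have h1 : (∫ s in (t + cr)..t', ψ s) + ∫ s in t'..(t' + cr), ψ s
      = ∫ s in (t + cr)..(t' + cr), ψ s :=
    intervalIntegral.integral_add_adjacent_intervals (hψint _ _) (hψint _ _)
  have h2 : (∫ s in t..(t + cr), ψ s) + ∫ s in (t + cr)..t', ψ s = ∫ s in t..t', ψ s :=
    intervalIntegral.integral_add_adjacent_intervals (hψint _ _) (hψint _ _)
  have hval : (∫ s in t..t', GA μ T lam A s)
      = cr⁻¹ * ((∫ s in t'..(t' + cr), ψ s) - ∫ s in t..(t + cr), ψ s) := by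
    rw [hint, hshift, ← h1, ← h2]
    ring
  -- bounds on the two boundary integrals
  have hub : ∀ a : ℝ, (∫ s in a..(a + cr), ψ s) ≤ cr * ψ (a + cr) := by
    intro a
    have h := intervalIntegral.integral_mono_on (by linarith : a ≤ a + cr)
      (hψint a (a + cr)) (intervalIntegrable_const (c := ψ (a + cr)))
      (fun x hx => hψmono hx.2)
    simpa using h
  have hlb : ∀ a : ℝ, cr * ψ a ≤ ∫ s in a..(a + cr), ψ s := by
    intro a
    have h := intervalIntegral.integral_mono_on (by linarith : a ≤ a + cr)
      (intervalIntegrable_const (c := ψ a)) (hψint a (a + cr))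
      (fun x hx => hψmono hx.1)
    simpa using h
  have hcri : (0 : ℝ) < cr⁻¹ := inv_pos.2 hcr
  have hup : (∫ s in t..t', GA μ T lam A s) ≤ ψ (t' + cr) - ψ t := by
    rw [hval]
    calc cr⁻¹ * ((∫ s in t'..(t' + cr), ψ s) - ∫ s in t..(t + cr), ψ s)
        ≤ cr⁻¹ * (cr * ψ (t' + cr) - cr * ψ t) := by
          apply mul_le_mul_of_nonneg_left _ hcri.le
          have := hub t'
          have := hlb t
          linarith
    _ = ψ (t' + cr) - ψ t := by
          field_simp
  have hlow : ψ t' - ψ (t + cr) ≤ ∫ s in t..t', GA μ T lam A s := by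
    rw [hval]
    calc ψ t' - ψ (t + cr) = cr⁻¹ * (cr * ψ t' - cr * ψ (t + cr)) := by field_simp
    _ ≤ cr⁻¹ * ((∫ s in t'..(t' + cr), ψ s) - ∫ s in t..(t + cr), ψ s) := by
          apply mul_le_mul_of_nonneg_left _ hcri.le
          have := hlb t'
          have := hub t
          linarith
  have hb1 : ψ (t + cr) - ψ t ≤ (μ A).toReal := hbound t ht.le
  have hb2 : ψ (t' + cr) - ψ t' ≤ (μ A).toReal := hbound t' (by linarith)
  rw [hFA, hFA]
  constructor
  · linarith
  · linarith
end
end
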